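/- Let V: ℝⁿ → ℝ be twice continuously differentiable with V ≥ 0 and V(x*) = 0, and let g, c ∈ ℝⁿ with c ≠ 0. Suppose the matching condition ∇V(x)ᵀg = cᵀ(x − x*) holds for all x in a neighborhood of x*. Then the Hessian P = ∇²V(x*) satisfies Pg = c, and consequently gᵀc = gᵀPg > 0. -/

import Mathlib

open Matrix

/-- 1D second derivative test at a global minimum. -/
lemma deriv2_nonneg_of_min {f f' : ℝ → ℝ} {L : ℝ}
    (hf : ∀ t, HasDerivAt f (f' t) t)
    (hf' : HasDerivAt f' L 0)
    (hmin : ∀ t, f 0 ≤ f t) : 0 ≤ L := by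
  by_contra hL
  push_neg at hL
  have h0 : f' 0 = 0 :=
    IsLocalMin.hasDerivAt_eq_zero (Filter.Eventually.of_forall hmin) (hf 0)
  have hslope := hasDerivAt_iff_tendsto_slope.1 hf'
  have hneg : ∀ᶠ t in nhdsWithin (0:ℝ) {(0:ℝ)}ᶜ, slope f' 0 t < 0 :=
    hslope.eventually_lt_const hL
  have hneg' : ∀ᶠ t in nhdsWithin (0:ℝ) (Set.Ioi 0), f' t < 0 := by
    have hmono : nhdsWithin (0:ℝ) (Set.Ioi 0) ≤ nhdsWithin 0 {(0:ℝ)}ᶜ :=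
      nhdsWithin_mono 0 (fun x hx => ne_of_gt hx)
    filter_upwards [hmono hneg, self_mem_nhdsWithin] with t ht ht0
    have hts : slope f' 0 t = f' t / t := by
      rw [slope_def_field, h0, sub_zero, sub_zero]
    rw [hts] at ht
    exact not_le.1 fun h => absurd (div_nonneg h (le_of_lt ht0)) (not_le.2 ht)
  obtain ⟨δ, hδ, hsub⟩ := mem_nhdsGT_iff_exists_Ioo_subset.1 hneg'
  have hδ0 : 0 < δ := hδ
  obtain ⟨ξ, hξ, heq⟩ := exists_hasDerivAt_eq_slope f f'
    (by linarith : (0:ℝ) < δ/2)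
    (fun x _ => (hf x).continuousAt.continuousWithinAt) (fun x _ => hf x)
  have h1 : f' ξ < 0 := hsub ⟨hξ.1, lt_trans hξ.2 (by linarith)⟩
  have h2 : 0 ≤ f' ξ := by
    rw [heq]
    exact div_nonneg (sub_nonneg.2 (hmin _)) (by linarith)
  linarith

/-- Matching obstruction: if V is C², nonnegative, V(x*) = 0, c ≠ 0, and the matching
condition ∇V(x)ᵀg = cᵀ(x − x*) holds in a neighborhood of x*, then the Hessian
P = ∇²V(x*) satisfies Pg = c (as a bilinear identity) and gᵀc = gᵀPg > 0. -/
theorem matching_obstruction {n : ℕ}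
    (V : (Fin n → ℝ) → ℝ) (hV : ContDiff ℝ 2 V)
    (hVnonneg : ∀ x, 0 ≤ V x) (xstar : Fin n → ℝ) (hmin : V xstar = 0)
    (g c : Fin n → ℝ) (hc : c ≠ 0)
    (hmatch : ∀ᶠ x in nhds xstar, fderiv ℝ V x g = c ⬝ᵥ (x - xstar)) :
    (∀ w : Fin n → ℝ, iteratedFDeriv ℝ 2 V xstar ![w, g] = c ⬝ᵥ w) ∧
    g ⬝ᵥ c = iteratedFDeriv ℝ 2 V xstar ![g, g] ∧
    0 < g ⬝ᵥ c := by
  set B := fderiv ℝ (fderiv ℝ V) xstar with hB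
  have hVd1 : Differentiable ℝ V := hV.differentiable (by norm_num)
  have hVd : HasFDerivAt (fderiv ℝ V) B xstar :=
    (((hV.fderiv_right (m := 1) (by norm_num)).differentiable (by norm_num)) xstar).hasFDerivAt
  have iter2 : ∀ v w : Fin n → ℝ, iteratedFDeriv ℝ 2 V xstar ![v, w] = B v w := by
    intro v w
    rw [iteratedFDeriv_two_apply]
    simp [hB]
  -- Part 1: B w g = c ⬝ᵥ w
  have hpart1 : ∀ w, B w g = c ⬝ᵥ w := by
    intro w
    have hF : HasFDerivAt (fun x => fderiv ℝ V x g)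
        ((ContinuousLinearMap.apply ℝ ℝ g).comp B) xstar :=
      (ContinuousLinearMap.apply ℝ ℝ g).hasFDerivAt.comp xstar hVd
    set T : (Fin n → ℝ) →L[ℝ] ℝ := LinearMap.toContinuousLinearMap
      { toFun := fun x => c ⬝ᵥ x,
        map_add' := fun x y => dotProduct_add c x y,
        map_smul' := fun r x => dotProduct_smul r c x } with hT
    have hTapp : ∀ x, T x = c ⬝ᵥ x := fun x => rfl
    have hG : HasFDerivAt (fun x => c ⬝ᵥ (x - xstar)) T xstar := by
      have h := T.hasFDerivAt (x := xstar) |>.sub_const (c ⬝ᵥ xstar)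
      have he : (fun x => T x - c ⬝ᵥ xstar) = fun x => c ⬝ᵥ (x - xstar) := by
        funext x; rw [hTapp, dotProduct_sub]
      rwa [he] at h
    have heq : (ContinuousLinearMap.apply ℝ ℝ g).comp B = T :=
      hF.fderiv ▸ hG.fderiv ▸ Filter.EventuallyEq.fderiv_eq hmatch
    have := congrArg (fun (S : (Fin n → ℝ) →L[ℝ] ℝ) => S w) heq
    simpa [hTapp] using this
  -- symmetry
  have hsymm : ∀ v w, B v w = B w v := hV.contDiffAt.isSymmSndFDerivAt (by simp [minSmoothness_of_isRCLikeNormedField])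
  -- PSD
  have hpsd : ∀ w : Fin n → ℝ, 0 ≤ B w w := by
    intro w
    have hl : ∀ t : ℝ, HasDerivAt (fun t : ℝ => xstar + t • w) w t := by
      intro t
      simpa using ((hasDerivAt_id t).smul_const w).const_add xstar
    have hf : ∀ t : ℝ, HasDerivAt (fun t : ℝ => V (xstar + t • w))
        (fderiv ℝ V (xstar + t • w) w) t := by
      intro t
      exact ((hVd1 (xstar + t • w)).hasFDerivAt).comp_hasDerivAt t (hl t)
    have hf' : HasDerivAt (fun t : ℝ => fderiv ℝ V (xstar + t • w) w) (B w w) 0 := by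
      have h1 : HasFDerivAt (fun x => fderiv ℝ V x w)
          ((ContinuousLinearMap.apply ℝ ℝ w).comp B) xstar :=
        (ContinuousLinearMap.apply ℝ ℝ w).hasFDerivAt.comp xstar hVd
      have h2 : HasFDerivAt (fun x => fderiv ℝ V x w)
          ((ContinuousLinearMap.apply ℝ ℝ w).comp B) (xstar + (0:ℝ) • w) := by
        simpa using h1
      simpa [Function.comp_def] using h2.comp_hasDerivAt 0 (hl 0)
    refine deriv2_nonneg_of_min hf hf' ?_
    intro t
    simp only [zero_smul, add_zero, hmin]
    exact hVnonneg _
  -- positivity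
  have hK : 0 < c ⬝ᵥ c := by
    rcases (dotProduct_self_eq_zero (v := c)).not.2 hc with h
    have hnn : 0 ≤ c ⬝ᵥ c := Finset.sum_nonneg fun i _ => mul_self_nonneg (c i)
    exact lt_of_le_of_ne hnn (Ne.symm h)
  have hGc : B g g = g ⬝ᵥ c := by rw [hpart1 g, dotProduct_comm]
  have hcg : B c g = c ⬝ᵥ c := hpart1 c
  have hgc : B g c = c ⬝ᵥ c := by rw [hsymm g c, hcg]
  have hpos : 0 < B g g := by
    have hM : 0 ≤ B c c := hpsd c
    have hM1 : (0:ℝ) < B c c + 1 := by linarith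
    set s : ℝ := (c ⬝ᵥ c) / (B c c + 1) with hs
    have hspos : 0 < s := div_pos hK hM1
    have hsK : s * (B c c + 1) = c ⬝ᵥ c := div_mul_cancel₀ _ (ne_of_gt hM1)
    have hq := hpsd (g + (-s) • c)
    have hexp : B (g + (-s) • c) (g + (-s) • c)
        = B g g + (-s) * B g c + (-s) * B c g + s * s * B c c := by
      have e1 : B (g + (-s) • c) = B g + (-s) • B c := by
        rw [_root_.map_add, _root_.map_smul]
      rw [e1]
      simp only [ContinuousLinearMap.add_apply, ContinuousLinearMap.smul_apply,
        _root_.map_add, _root_.map_smul, smul_eq_mul]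
      ring
    rw [hexp, hgc, hcg] at hq
    nlinarith [mul_pos hspos hspos, hq, hsK, hM]
  refine ⟨fun w => by rw [iter2, hpart1], ?_, ?_⟩
  · rw [iter2, hGc]
  · rw [← hGc]; exact hpos
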